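/- For every fixed α > 0 with α ≠ 1, the Rényi entropy of the Poisson distribution, H_R^α(λ) = (1/(1-α)) · log( e^{-αλ} · ∑_{k=0}^∞ λ^{kα}/(k!)^α ), is a strictly increasing function of λ on (0, +∞). -/

import Mathlib

open Real Finset Filter

namespace RenyiPoissonAux

noncomputable def P (l : ℝ) (k : ℕ) : ℝ := l ^ k * Real.exp (-l) / (Nat.factorial k : ℝ)

lemma P_pos {l : ℝ} (hl : 0 < l) (k : ℕ) : 0 < P l k := by
  apply div_pos (mul_pos (pow_pos hl k) (Real.exp_pos _))
  exact_mod_cast Nat.factorial_pos k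

lemma P_succ (l : ℝ) (n : ℕ) : P l (n + 1) = P l n * (l / (n + 1)) := by
  have h : ((Nat.factorial (n+1) : ℕ) : ℝ) = (n+1) * (Nat.factorial n : ℝ) := by
    push_cast [Nat.factorial_succ]; ring
  have h0 : (Nat.factorial n : ℝ) ≠ 0 := by exact_mod_cast (Nat.factorial_pos n).ne'
  have h1 : ((n : ℝ) + 1) ≠ 0 := by positivity
  unfold P
  rw [h]
  field_simp [P, h, pow_succ]
  ring

lemma tsum_P {l : ℝ} : ∑' k, P l k = 1 := by
  have : (fun k => P l k) = fun k : ℕ => Real.exp (-l) * (l ^ k / (Nat.factorial k : ℝ)) := by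
    funext k; simp [P]; ring
  rw [this, tsum_mul_left]
  have h := NormedSpace.exp_eq_tsum_div (𝔸 := ℝ)
  have h2 : Real.exp l = ∑' n : ℕ, l ^ n / (Nat.factorial n : ℝ) := by
    rw [Real.exp_eq_exp_ℝ, h]
  rw [← h2, ← Real.exp_add]
  simp

lemma summable_P {l : ℝ} (hl : 0 < l) : Summable (P l) := by
  have := Real.summable_pow_div_factorial l
  have : Summable (fun k : ℕ => Real.exp (-l) * (l ^ k / (Nat.factorial k : ℝ))) :=
    this.mul_left _
  refine this.congr fun k => by simp [P]; ring

lemma summable_Pα {l α : ℝ} (hl : 0 < l) (hα : 0 < α) :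
    Summable (fun k => P l k ^ α) := by
  set c : ℝ := (1/2 : ℝ) ^ α⁻¹ with hc
  have hc0 : 0 < c := Real.rpow_pos_of_pos (by norm_num) _
  apply summable_of_ratio_norm_eventually_le (r := 1/2) (by norm_num)
  have hev : ∀ᶠ n : ℕ in atTop, l / (n + 1) ≤ c := by
    have htend : Tendsto (fun n : ℕ => l / (n + 1)) atTop (nhds 0) := by
      apply Tendsto.div_atTop (tendsto_const_nhds)
      exact tendsto_atTop_add_const_right _ 1 tendsto_natCast_atTop_atTop
    exact htend.eventually_le_const hc0
  filter_upwards [hev] with n hn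
  have hp := P_pos hl
  have hnn : (0:ℝ) ≤ l / (n+1) := by positivity
  rw [Real.norm_of_nonneg (Real.rpow_nonneg (hp _).le _),
    Real.norm_of_nonneg (Real.rpow_nonneg (hp _).le _), P_succ,
    Real.mul_rpow (hp n).le hnn]
  have : (l / (n+1) : ℝ) ^ α ≤ (1/2 : ℝ) := by
    calc (l / (n+1) : ℝ) ^ α ≤ c ^ α := Real.rpow_le_rpow hnn hn hα.le
    _ = 1/2 := Real.rpow_inv_rpow (by norm_num) hα.ne'
  calc P l n ^ α * (l / (n+1)) ^ α ≤ P l n ^ α * (1/2) :=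
        mul_le_mul_of_nonneg_left this (Real.rpow_nonneg (hp n).le _)
    _ = 1/2 * P l n ^ α := by ring

lemma P_add (x y : ℝ) (k : ℕ) :
    P (x + y) k = ∑ j ∈ range (k + 1), P x j * P y (k - j) := by
  unfold P
  rw [add_pow, Finset.sum_mul, Finset.sum_div]
  refine Finset.sum_congr rfl fun j hj => ?_
  have hjk : j ≤ k := Nat.lt_succ_iff.mp (Finset.mem_range.mp hj)
  have hch : (k.choose j : ℝ) = (Nat.factorial k : ℝ) /
      ((Nat.factorial j : ℝ) * (Nat.factorial (k - j) : ℝ)) := Nat.cast_choose ℝ hjk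
  have hj0 : (Nat.factorial j : ℝ) ≠ 0 := by exact_mod_cast (Nat.factorial_pos j).ne'
  have hk0 : (Nat.factorial k : ℝ) ≠ 0 := by exact_mod_cast (Nat.factorial_pos k).ne'
  have hkj0 : (Nat.factorial (k - j) : ℝ) ≠ 0 := by exact_mod_cast (Nat.factorial_pos _).ne'
  rw [neg_add, Real.exp_add, hch]
  field_simp

/-- Jensen for `x ↦ x^α`, `α ≥ 1`, with subprobability weights. -/
lemma jensen_le {ι : Type*} (s : Finset ι) (w x : ι → ℝ) (hw : ∀ i ∈ s, 0 ≤ w i)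
    (hx : ∀ i ∈ s, 0 ≤ x i) (hW1 : ∑ i ∈ s, w i ≤ 1) (hW0 : 0 < ∑ i ∈ s, w i)
    {α : ℝ} (hα : 1 ≤ α) :
    (∑ i ∈ s, w i * x i) ^ α ≤ ∑ i ∈ s, w i * x i ^ α := by
  set W := ∑ i ∈ s, w i with hW
  have hWne : W ≠ 0 := hW0.ne'
  have h := Real.rpow_arith_mean_le_arith_mean_rpow s (fun i => w i / W) (fun i => W * x i)
    (fun i hi => div_nonneg (hw i hi) hW0.le)
    (by rw [← Finset.sum_div]; field_simp; rfl)
    (fun i hi => mul_nonneg hW0.le (hx i hi)) hα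
  have hL : ∀ i ∈ s, w i / W * (W * x i) = w i * x i := fun i _ => by field_simp
  rw [Finset.sum_congr rfl hL] at h
  refine h.trans ?_
  have hterm : ∀ i ∈ s, w i / W * (W * x i) ^ α = W ^ (α - 1) * (w i * x i ^ α) := by
    intro i hi
    rw [Real.mul_rpow hW0.le (hx i hi), Real.rpow_sub hW0]
    rw [Real.rpow_one]
    field_simp
  rw [Finset.sum_congr rfl hterm, ← Finset.mul_sum]
  have h1 : W ^ (α - 1) ≤ 1 := Real.rpow_le_one hW0.le hW1 (by linarith)
  have h2 : (0:ℝ) ≤ ∑ i ∈ s, w i * x i ^ α :=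
    Finset.sum_nonneg fun i hi => mul_nonneg (hw i hi) (Real.rpow_nonneg (hx i hi) _)
  nlinarith

/-- Reverse Jensen for `x ↦ x^α`, `0 < α ≤ 1`, with subprobability weights. -/
lemma jensen_ge {ι : Type*} (s : Finset ι) (w x : ι → ℝ) (hw : ∀ i ∈ s, 0 ≤ w i)
    (hx : ∀ i ∈ s, 0 ≤ x i) (hW1 : ∑ i ∈ s, w i ≤ 1) (hW0 : 0 < ∑ i ∈ s, w i)
    {α : ℝ} (hα0 : 0 < α) (hα : α ≤ 1) :
    ∑ i ∈ s, w i * x i ^ α ≤ (∑ i ∈ s, w i * x i) ^ α := by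
  set W := ∑ i ∈ s, w i with hW
  have hWne : W ≠ 0 := hW0.ne'
  have hp : (1:ℝ) ≤ 1 / α := by
    rw [le_div_iff₀ hα0]; linarith
  have h := Real.arith_mean_le_rpow_mean s (fun i => w i / W) (fun i => (W * x i) ^ α)
    (fun i hi => div_nonneg (hw i hi) hW0.le)
    (by rw [← Finset.sum_div]; field_simp; rfl)
    (fun i hi => Real.rpow_nonneg (mul_nonneg hW0.le (hx i hi)) _) hp
  have hR : ∀ i ∈ s, w i / W * ((W * x i) ^ α) ^ (1/α) = w i * x i := by
    intro i hi
    rw [one_div, Real.rpow_rpow_inv (mul_nonneg hW0.le (hx i hi)) hα0.ne']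
    field_simp
  rw [Finset.sum_congr rfl hR, one_div_one_div] at h
  have hterm : ∀ i ∈ s, w i / W * (W * x i) ^ α = W ^ (α - 1) * (w i * x i ^ α) := by
    intro i hi
    rw [Real.mul_rpow hW0.le (hx i hi), Real.rpow_sub hW0, Real.rpow_one]
    field_simp
  rw [Finset.sum_congr rfl hterm, ← Finset.mul_sum] at h
  have h1 : 1 ≤ W ^ (α - 1) :=
    Real.one_le_rpow_of_pos_of_le_one_of_nonpos hW0 hW1 (by linarith)
  have h2 : (0:ℝ) ≤ ∑ i ∈ s, w i * x i ^ α :=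
    Finset.sum_nonneg fun i hi => mul_nonneg (hw i hi) (Real.rpow_nonneg (hx i hi) _)
  nlinarith
lemma key {l1 l2 α : ℝ} (h1 : 0 < l1) (h12 : l1 < l2) (hα0 : 0 < α) :
    (α < 1 → ∑' k, P l1 k ^ α < ∑' k, P l2 k ^ α) ∧
    (1 < α → ∑' k, P l2 k ^ α < ∑' k, P l1 k ^ α) := by
  set s := l2 - l1 with hsdef
  have hs : 0 < s := by simp [hsdef]; linarith
  have hl2 : s + l1 = l2 := by ring
  have h2 : 0 < l2 := h1.trans h12
  set g : ℕ → ℝ := fun n => ∑ j ∈ range (n + 1), P s j * P l1 (n - j) ^ α with hg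
  have hQn : Summable (fun j => ‖P s j‖) :=
    (summable_P hs).congr fun j => (Real.norm_of_nonneg (P_pos hs j).le).symm
  have hGn : Summable (fun k => ‖P l1 k ^ α‖) :=
    (summable_Pα h1 hα0).congr fun k =>
      (Real.norm_of_nonneg (Real.rpow_nonneg (P_pos h1 k).le _)).symm
  have hgsum : Summable g :=
    (summable_norm_sum_mul_range_of_summable_norm hQn hGn).of_norm
  have htg : ∑' n, g n = ∑' k, P l1 k ^ α := by
    have h := tsum_mul_tsum_eq_tsum_sum_range_of_summable_norm hQn hGn
    rw [tsum_P, one_mul] at h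
    exact h.symm
  have hPadd : ∀ n, P l2 n = ∑ j ∈ range (n + 1), P s j * P l1 (n - j) := by
    intro n; rw [← hl2]; exact P_add s l1 n
  have hW0 : ∀ n : ℕ, 0 < ∑ j ∈ range (n + 1), P s j := fun n =>
    Finset.sum_pos (fun j _ => P_pos hs j) ⟨0, Finset.mem_range.mpr n.succ_pos⟩
  have hW1 : ∀ n : ℕ, ∑ j ∈ range (n + 1), P s j ≤ 1 := fun n =>
    (Summable.sum_le_tsum _ (fun j _ => (P_pos hs j).le) (summable_P hs)).trans_eq tsum_P
  have hQ0lt1 : P s 0 < 1 := by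
    simp [P, Real.exp_lt_one_iff]; exact hs
  have hg0 : g 0 = P s 0 * P l1 0 ^ α := by simp [hg]
  have hP20 : P l2 0 = P s 0 * P l1 0 := by rw [hPadd 0]; simp
  constructor
  · -- α < 1
    intro hα
    have hle : ∀ n, g n ≤ P l2 n ^ α := by
      intro n
      rw [hPadd n]
      exact jensen_ge (range (n+1)) (P s) (fun j => P l1 (n - j))
        (fun j _ => (P_pos hs j).le) (fun j _ => (P_pos h1 _).le)
        (hW1 n) (hW0 n) hα0 hα.le
    have hstrict : g 0 < P l2 0 ^ α := by
      rw [hg0, hP20, Real.mul_rpow (P_pos hs 0).le (P_pos h1 0).le]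
      apply mul_lt_mul_of_pos_right _ (Real.rpow_pos_of_pos (P_pos h1 0) _)
      calc P s 0 = P s 0 ^ (1:ℝ) := (Real.rpow_one _).symm
        _ < P s 0 ^ α := Real.rpow_lt_rpow_of_exponent_gt (P_pos hs 0) hQ0lt1 hα
    have h := Summable.tsum_lt_tsum_of_nonneg (i := 0)
      (fun n => Finset.sum_nonneg fun j _ =>
        mul_nonneg (P_pos hs j).le (Real.rpow_nonneg (P_pos h1 _).le _))
      hle hstrict (summable_Pα h2 hα0)
    rw [htg] at h
    exact h
  · -- 1 < α
    intro hα
    have hle : ∀ n, P l2 n ^ α ≤ g n := by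
      intro n
      rw [hPadd n]
      exact jensen_le (range (n+1)) (P s) (fun j => P l1 (n - j))
        (fun j _ => (P_pos hs j).le) (fun j _ => (P_pos h1 _).le)
        (hW1 n) (hW0 n) hα.le
    have hstrict : P l2 0 ^ α < g 0 := by
      rw [hg0, hP20, Real.mul_rpow (P_pos hs 0).le (P_pos h1 0).le]
      apply mul_lt_mul_of_pos_right _ (Real.rpow_pos_of_pos (P_pos h1 0) _)
      calc P s 0 ^ α < P s 0 ^ (1:ℝ) :=
            Real.rpow_lt_rpow_of_exponent_gt (P_pos hs 0) hQ0lt1 hα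
        _ = P s 0 := Real.rpow_one _
    have h := Summable.tsum_lt_tsum_of_nonneg (i := 0)
      (fun n => Real.rpow_nonneg (P_pos h2 _).le _)
      hle hstrict hgsum
    rw [htg] at h
    exact h

end RenyiPoissonAux

theorem renyi_entropy_poisson_strictMonoOn (α : ℝ) (hα : 0 < α) (hα1 : α ≠ 1) :
    StrictMonoOn (fun l : ℝ =>
      (1 / (1 - α)) *
        Real.log (∑' k : ℕ, (l ^ k * Real.exp (-l) / (Nat.factorial k : ℝ)) ^ α))
      (Set.Ioi (0 : ℝ)) := by
  intro l1 hl1 l2 hl2 h12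
  simp only [Set.mem_Ioi] at hl1 hl2
  open RenyiPoissonAux in
  show (1 / (1 - α)) * Real.log (∑' k, P l1 k ^ α) <
    (1 / (1 - α)) * Real.log (∑' k, P l2 k ^ α)
  have hT : ∀ l : ℝ, 0 < l → 0 < ∑' k, RenyiPoissonAux.P l k ^ α := by
    intro l hl
    refine Summable.tsum_pos (RenyiPoissonAux.summable_Pα hl hα)
      (fun k => Real.rpow_nonneg (RenyiPoissonAux.P_pos hl k).le _) 0
      (Real.rpow_pos_of_pos (RenyiPoissonAux.P_pos hl 0) _)
  have hkey := RenyiPoissonAux.key hl1 h12 hα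
  rcases lt_or_gt_of_ne hα1 with hlt | hgt
  · have h := Real.log_lt_log (hT l1 hl1) (hkey.1 hlt)
    exact mul_lt_mul_of_pos_left h (div_pos one_pos (by linarith))
  · have h := Real.log_lt_log (hT l2 hl2) (hkey.2 hgt)
    have hneg : 1 / (1 - α) < 0 := div_neg_of_pos_of_neg one_pos (by linarith)
    exact mul_lt_mul_of_neg_left h hneg
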